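/- The function φ₂(x) = ∫₀^∞ η(t) e^{κ(b-x)t} dt satisfies the ordinary differential equation ρ φ₂(x) - a(b - x) φ₂'(x) - (σ²/2) φ₂''(x) = 0 for all x ∈ ℝ. -/

import Mathlib

open MeasureTheory Real Set Filter

noncomputable def Jf (p c t : ℝ) : ℝ := t ^ p * Real.exp (-t ^ 2 / 2) * Real.exp (c * t)

lemma Jf_contOn (p c : ℝ) : ContinuousOn (Jf p c) (Ioi 0) := by
  apply ContinuousOn.mul
  apply ContinuousOn.mul
  · exact fun t ht => (Real.continuousAt_rpow_const t p (Or.inl (ne_of_gt ht))).continuousWithinAt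
  · exact (Real.continuous_exp.comp (by continuity)).continuousOn
  · exact (Real.continuous_exp.comp (by continuity)).continuousOn

lemma Jf_nonneg (p c : ℝ) {t : ℝ} (ht : 0 < t) : 0 ≤ Jf p c t := by
  exact mul_nonneg (mul_nonneg (Real.rpow_nonneg ht.le p) (Real.exp_nonneg _)) (Real.exp_nonneg _)

lemma Jf_integrable {p : ℝ} (hp : -1 < p) (c : ℝ) : IntegrableOn (Jf p c) (Ioi 0) := by
  have hsplit : Ioc (0:ℝ) 1 ∪ Ioi (1:ℝ) = Ioi 0 := Ioc_union_Ioi_eq_Ioi zero_le_one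
  rw [← hsplit]
  apply IntegrableOn.union
  · -- on Ioc 0 1
    have hint : IntegrableOn (fun t : ℝ => t ^ p) (Ioc 0 1) := by
      have := (intervalIntegral.intervalIntegrable_rpow' (a := 0) (b := 1) hp)
      rw [intervalIntegrable_iff_integrableOn_Ioc_of_le zero_le_one] at this
      exact this
    refine Integrable.mono' (hint.const_mul (Real.exp |c|)) ?_ ?_
    · exact ((Jf_contOn p c).mono Ioc_subset_Ioi_self).aestronglyMeasurable measurableSet_Ioc
    · filter_upwards [ae_restrict_mem measurableSet_Ioc] with t ht
      rw [Real.norm_eq_abs, abs_of_nonneg (Jf_nonneg p c ht.1), Jf]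
      rw [mul_comm (Real.exp |c|) _]
      apply mul_le_mul
      · calc t ^ p * Real.exp (-t ^ 2 / 2) ≤ t ^ p * 1 := by
              apply mul_le_mul_of_nonneg_left _ (Real.rpow_nonneg ht.1.le p)
              exact Real.exp_le_one_iff.2 (by nlinarith [sq_nonneg t])
           _ = t ^ p := mul_one _
      · apply Real.exp_le_exp.2
        calc c * t ≤ |c * t| := le_abs_self _
          _ = |c| * |t| := abs_mul c t
          _ ≤ |c| * 1 := by
              apply mul_le_mul_of_nonneg_left _ (abs_nonneg c)
              rw [abs_of_pos ht.1]; exact ht.2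
          _ = |c| := mul_one _
      · exact Real.exp_nonneg _
      · exact Real.rpow_nonneg ht.1.le p
  · -- on Ioi 1
    set d := c + |p| with hd
    have hint : IntegrableOn (fun t : ℝ => Real.exp (d ^ 2 / 2) * Real.exp (-(1/2) * (t - d) ^ 2)) (Ioi 1) := by
      exact (((integrable_exp_neg_mul_sq (by norm_num : (0:ℝ) < 1/2)).comp_sub_right d).const_mul _).integrableOn
    refine Integrable.mono' hint ?_ ?_
    · exact ((Jf_contOn p c).mono (Ioi_subset_Ioi zero_le_one)).aestronglyMeasurable measurableSet_Ioi
    · filter_upwards [ae_restrict_mem measurableSet_Ioi] with t ht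
      have ht0 : (0:ℝ) < t := lt_trans zero_lt_one ht
      rw [Real.norm_eq_abs, abs_of_nonneg (Jf_nonneg p c ht0), Jf]
      have h1 : t ^ p ≤ Real.exp (|p| * t) := by
        rw [Real.rpow_def_of_pos ht0]
        apply Real.exp_le_exp.2
        calc Real.log t * p ≤ Real.log t * |p| := by
              apply mul_le_mul_of_nonneg_left (le_abs_self p)
              exact Real.log_nonneg ht.le
          _ = |p| * Real.log t := mul_comm _ _
          _ ≤ |p| * t := by
              apply mul_le_mul_of_nonneg_left _ (abs_nonneg p)
              exact (Real.log_le_sub_one_of_pos ht0).trans (by linarith)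
      calc t ^ p * Real.exp (-t ^ 2 / 2) * Real.exp (c * t)
          ≤ Real.exp (|p| * t) * Real.exp (-t ^ 2 / 2) * Real.exp (c * t) := by
            apply mul_le_mul_of_nonneg_right _ (Real.exp_nonneg _)
            exact mul_le_mul_of_nonneg_right h1 (Real.exp_nonneg _)
        _ = Real.exp (d ^ 2 / 2) * Real.exp (-(1/2) * (t - d) ^ 2) := by
            rw [← Real.exp_add, ← Real.exp_add, ← Real.exp_add, hd]; ring_nf

lemma Jf_hasDerivAt_param {p : ℝ} (hp : -1 < p) (c : ℝ) :
    HasDerivAt (fun x => ∫ t in Ioi (0:ℝ), Jf p x t) (∫ t in Ioi (0:ℝ), Jf (p+1) c t) c := by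
  have key := hasDerivAt_integral_of_dominated_loc_of_deriv_le
    (F := fun x t => Jf p x t) (F' := fun x t => Jf (p+1) x t)
    (x₀ := c) (bound := fun t => Jf (p+1) (|c|+1) t)
    (μ := volume.restrict (Ioi (0:ℝ))) (s := Metric.ball c 1) (Metric.ball_mem_nhds c one_pos) ?_ ?_ ?_ ?_ ?_ ?_
  · exact key.2
  · filter_upwards with x
    exact ((Jf_contOn p x).aestronglyMeasurable measurableSet_Ioi)
  · exact Jf_integrable hp c
  · exact ((Jf_contOn (p+1) c).aestronglyMeasurable measurableSet_Ioi)
  · filter_upwards [ae_restrict_mem measurableSet_Ioi] with t ht x hx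
    rw [Real.norm_eq_abs, abs_of_nonneg (Jf_nonneg _ _ ht), Jf, Jf]
    apply mul_le_mul_of_nonneg_left _ (mul_nonneg (Real.rpow_nonneg (le_of_lt ht) _) (Real.exp_nonneg _))
    apply Real.exp_le_exp.2
    apply mul_le_mul_of_nonneg_right _ (le_of_lt ht)
    have := Metric.mem_ball.mp hx
    rw [Real.dist_eq] at this
    calc x ≤ c + |x - c| := by cases abs_cases (x - c) with
            | inl h => linarith [h.1]
            | inr h => linarith [h.1, abs_nonneg (x - c)]
      _ ≤ |c| + 1 := by linarith [le_abs_self c]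
  · exact Jf_integrable (by linarith) (|c|+1)
  · filter_upwards [ae_restrict_mem measurableSet_Ioi] with t ht x _
    have h0 : HasDerivAt (fun x : ℝ => x * t) (1 * t) x := (hasDerivAt_id x).mul_const t
    have h1 : HasDerivAt (fun x : ℝ => Real.exp (x * t)) (Real.exp (x * t) * (1 * t)) x :=
      h0.exp
    have h2 := h1.const_mul (t ^ p * Real.exp (-t ^ 2 / 2))
    refine h2.congr_deriv ?_
    rw [Jf, Real.rpow_add_one (ne_of_gt ht)]
    ring

lemma Jf_ftc {q : ℝ} (hq : 0 < q) (c : ℝ) :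
    (∫ t in Ioi (0:ℝ), (q * Jf (q-1) c t + c * Jf q c t - Jf (q+1) c t)) = 0 := by
  have hq1 : (-1:ℝ) < q - 1 := by linarith
  have hderiv : ∀ t ∈ Ioi (0:ℝ), HasDerivAt (Jf q c)
      (q * Jf (q-1) c t + c * Jf q c t - Jf (q+1) c t) t := by
    intro t ht
    have h1 : HasDerivAt (fun t : ℝ => t ^ q) (q * t ^ (q - 1)) t :=
      Real.hasDerivAt_rpow_const (Or.inl (ne_of_gt ht))
    have h2 : HasDerivAt (fun t : ℝ => Real.exp (-t ^ 2 / 2)) (Real.exp (-t ^ 2 / 2) * (-t)) t := by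
      have hin : HasDerivAt (fun t : ℝ => -t ^ 2 / 2) (-t) t := by
        have := ((hasDerivAt_pow 2 t).neg).div_const 2
        refine this.congr_deriv ?_
        simp; ring
      exact (Real.hasDerivAt_exp _).comp t hin
    have h3 : HasDerivAt (fun t : ℝ => Real.exp (c * t)) (Real.exp (c * t) * c) t := by
      have hin : HasDerivAt (fun t : ℝ => c * t) c t := by
        simpa using (hasDerivAt_id t).const_mul c
      exact (Real.hasDerivAt_exp _).comp t hin
    have := (h1.mul h2).mul h3
    refine this.congr_deriv ?_
    unfold Jf
    rw [Real.rpow_add_one (ne_of_gt ht)]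
    simp only [Pi.mul_apply]
    ring
  have hcont : ContinuousWithinAt (Jf q c) (Ici 0) 0 := by
    apply ContinuousWithinAt.mul
    apply ContinuousWithinAt.mul
    · exact (Real.continuousAt_rpow_const 0 q (Or.inr hq.le)).continuousWithinAt
    · exact (Real.continuous_exp.comp (by continuity)).continuousWithinAt
    · exact (Real.continuous_exp.comp (by continuity)).continuousWithinAt
  have hint : IntegrableOn (fun t => q * Jf (q-1) c t + c * Jf q c t - Jf (q+1) c t) (Ioi (0:ℝ)) :=
    (((Jf_integrable hq1 c).const_mul q).add ((Jf_integrable (by linarith) c).const_mul c)).sub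
      (Jf_integrable (by linarith) c)
  have htend : Tendsto (Jf q c) atTop (nhds 0) := by
    apply squeeze_zero' (g := fun t => t ^ q * Real.exp (-1 * t))
    · filter_upwards [eventually_gt_atTop 0] with t ht
      exact Jf_nonneg q c ht
    · filter_upwards [eventually_ge_atTop (max 1 (2 * (c + 1)))] with t ht
      have ht1 : (1:ℝ) ≤ t := le_trans (le_max_left _ _) ht
      have ht2 : 2 * (c + 1) ≤ t := le_trans (le_max_right _ _) ht
      unfold Jf
      rw [mul_assoc, ← Real.exp_add]
      apply mul_le_mul_of_nonneg_left _ (Real.rpow_nonneg (by linarith) q)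
      apply Real.exp_le_exp.2
      nlinarith
    · exact tendsto_rpow_mul_exp_neg_mul_atTop_nhds_zero q 1 one_pos
  rw [integral_Ioi_of_hasDerivAt_of_tendsto hcont hderiv hint htend]
  unfold Jf
  rw [Real.zero_rpow (ne_of_gt hq)]
  ring

lemma Jf_ftc' {p : ℝ} (hp : -1 < p) (c : ℝ) :
    (∫ t in Ioi (0:ℝ), ((p+1) * Jf p c t + c * Jf (p+1) c t - Jf (p+1+1) c t)) = 0 := by
  have h := Jf_ftc (q := p + 1) (by linarith) c
  rw [show (p:ℝ) + 1 - 1 = p from by ring] at h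
  exact h

theorem stmt_4 (a ρ σ b : ℝ) (ha : 0 < a) (hρ : 0 < ρ) (hσ : 0 < σ)
    (κ : ℝ) (hκ : κ = Real.sqrt (2 * a) / σ)
    (η : ℝ → ℝ) (hη : ∀ t, η t = t ^ (ρ / a - 1) * Real.exp (-t ^ 2 / 2))
    (φ₂ : ℝ → ℝ)
    (hφ₂ : ∀ x, φ₂ x = ∫ t in Ioi (0 : ℝ), η t * Real.exp (κ * (b - x) * t)) :
    ∀ x : ℝ,
      ρ * φ₂ x - a * (b - x) * deriv φ₂ x - σ ^ 2 / 2 * deriv (deriv φ₂) x = 0 := by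
  set p : ℝ := ρ / a - 1 with hpdef
  have hp : -1 < p := by
    have : 0 < ρ / a := div_pos hρ ha
    rw [hpdef]; linarith
  have hp1 : -1 < p + 1 := by linarith
  have hφ₂eq : φ₂ = fun x => ∫ t in Ioi (0:ℝ), Jf p (κ * (b - x)) t := by
    funext x
    rw [hφ₂]
    congr 1
    funext t
    rw [hη, Jf, mul_assoc]
  have hinner : ∀ x : ℝ, HasDerivAt (fun x => κ * (b - x)) (-κ) x := by
    intro x
    have := ((hasDerivAt_id x).const_sub b).const_mul κ
    refine this.congr_deriv ?_
    ring
  have hD1 : ∀ x : ℝ, HasDerivAt φ₂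
      (-κ * ∫ t in Ioi (0:ℝ), Jf (p+1) (κ * (b - x)) t) x := by
    intro x
    rw [hφ₂eq]
    have h := (Jf_hasDerivAt_param hp (κ * (b - x))).comp x (hinner x)
    refine h.congr_deriv ?_
    ring
  have hderiv1 : deriv φ₂ = fun x => -κ * ∫ t in Ioi (0:ℝ), Jf (p+1) (κ * (b - x)) t := by
    funext x; exact (hD1 x).deriv
  have hD2 : ∀ x : ℝ, HasDerivAt (deriv φ₂)
      (κ ^ 2 * ∫ t in Ioi (0:ℝ), Jf (p+1+1) (κ * (b - x)) t) x := by
    intro x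
    rw [hderiv1]
    have h := ((Jf_hasDerivAt_param hp1 (κ * (b - x))).comp x (hinner x)).const_mul (-κ)
    refine h.congr_deriv ?_
    ring
  intro x
  rw [(hD2 x).deriv, hderiv1, hφ₂eq]
  beta_reduce
  set c : ℝ := κ * (b - x) with hcdef
  set I0 : ℝ := ∫ t in Ioi (0:ℝ), Jf p c t with hI0
  set I1 : ℝ := ∫ t in Ioi (0:ℝ), Jf (p+1) c t with hI1
  set I2 : ℝ := ∫ t in Ioi (0:ℝ), Jf (p+1+1) c t with hI2
  have hsplit : (p+1) * I0 + c * I1 - I2 = 0 := by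
    have hA : Integrable (fun t => (p+1) * Jf p c t) (volume.restrict (Ioi 0)) :=
      (Jf_integrable hp c).const_mul _
    have hB : Integrable (fun t => c * Jf (p+1) c t) (volume.restrict (Ioi 0)) :=
      (Jf_integrable hp1 c).const_mul _
    have hC : Integrable (fun t => Jf (p+1+1) c t) (volume.restrict (Ioi 0)) :=
      Jf_integrable (by linarith) c
    have hAB : Integrable (fun t => (p+1) * Jf p c t + c * Jf (p+1) c t)
        (volume.restrict (Ioi 0)) := hA.add hB
    have h := Jf_ftc' hp c
    rw [integral_sub hAB hC, integral_add hA hB, integral_const_mul, integral_const_mul] at h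
    exact h
  have hκ2 : σ ^ 2 / 2 * κ ^ 2 = a := by
    rw [hκ, div_pow, Real.sq_sqrt (by linarith)]
    field_simp
  have hρeq : ρ = a * (p + 1) := by
    rw [hpdef]
    field_simp
    ring
  linear_combination a * hsplit + I0 * hρeq - I2 * hκ2
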